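/- arXiv:2107.03493 — 4 statements merged into one kernel-verified Lean document; each statement's English description precedes it below -/
import Mathlib

section
/- Let Θ be a compact metric space, S : Θ → Θ a homeomorphism, m an S-invariant Borel probability measure on Θ, I = [0,1], and F(θ,x) = (S(θ), f_θ(x)) a skew product on Θ × I such that (θ,x) ↦ f_θ(x) is continuous and each fiber map f_θ : I → (0,1) is a strictly increasing C² map. Let μ be an ergodic F-invariant Borel probability measure on Θ × I whose first-coordinate marginal is m. Then there exists an (F,m)-invariant graph γ : Θ → I such that μ = m_γ, i.e. μ equals the pushforward of m under θ ↦ (θ, γ(θ)). -/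
open MeasureTheory Set Filter Topology

open scoped ENNReal unitInterval
open ProbabilityTheory

lemma eq_dirac_of_singleton_one {α : Type*} [MeasurableSpace α] [MeasurableSingletonClass α]
    (ν : Measure α) [IsProbabilityMeasure ν] {t : α} (ht : ν {t} = 1) : ν = Measure.dirac t := by
  have hc : ν ({t}ᶜ) = 0 := (prob_compl_eq_zero_iff (measurableSet_singleton t)).mpr ht
  ext s hs
  rw [Measure.dirac_apply' _ hs]
  by_cases hts : t ∈ s
  · have hle : ν {t} ≤ ν s := measure_mono (singleton_subset_iff.mpr hts)
    have hge : ν s ≤ 1 := prob_le_one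
    simp [indicator_of_mem hts, le_antisymm hge (ht ▸ hle)]
  · have hsub : s ⊆ {t}ᶜ := fun x hx => by
      simp only [mem_compl_iff, mem_singleton_iff]; rintro rfl; exact hts hx
    simp [indicator_of_notMem hts, measure_mono_null hsub hc]

lemma dirac_of_ae_cdf_const (ν : Measure ℝ) [IsProbabilityMeasure ν] (c : ℝ≥0∞)
    (hsupp : ∀ᵐ x ∂ν, x ∈ Icc (0:ℝ) 1) (h : ∀ᵐ x ∂ν, ν (Iic x) = c) :
    ∃ t, ν = Measure.dirac t := by
  set A : Set ℝ := {x | x ∈ Icc (0:ℝ) 1 ∧ ν (Iic x) = c} with hAdef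
  have hae : ∀ᵐ x ∂ν, x ∈ A := hsupp.and h
  have hAc : ν Aᶜ = 0 := hae
  have hne : A.Nonempty := by
    by_contra hemp
    rw [not_nonempty_iff_eq_empty] at hemp
    rw [hemp, compl_empty] at hAc
    simp [measure_univ] at hAc
  have hbdd_above : BddAbove A := ⟨1, fun x hx => hx.1.2⟩
  have hbdd_below : BddBelow A := ⟨0, fun x hx => hx.1.1⟩
  set t := sInf A with htdef
  set u := sSup A with hudef
  have hIio : ν (Iio t) = 0 := by
    refine measure_mono_null (fun x hx => ?_) hAc
    intro hxA
    exact absurd (csInf_le hbdd_below hxA) (not_le.mpr hx)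
  have hIict : ν (Iic t) = c := by
    obtain ⟨x, hanti, htend, hmem⟩ := exists_seq_tendsto_sInf hne hbdd_below
    have hseteq : Iic t = ⋂ n, Iic (x n) := by
      ext y
      simp only [mem_Iic, mem_iInter]
      constructor
      · intro hy n; exact hy.trans (csInf_le hbdd_below (hmem n))
      · intro hy; exact ge_of_tendsto htend (Eventually.of_forall hy)
    have htend2 : Tendsto (fun n => ν (Iic (x n))) atTop (𝓝 (ν (⋂ n, Iic (x n)))) :=
      tendsto_measure_iInter_atTop (fun n => measurableSet_Iic.nullMeasurableSet)
        (fun i j hij => Iic_subset_Iic.mpr (hanti hij)) ⟨0, measure_ne_top ν _⟩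
    have hconst : (fun n => ν (Iic (x n))) = fun _ => c := funext fun n => (hmem n).2
    rw [hconst] at htend2
    rw [hseteq]
    exact (tendsto_nhds_unique tendsto_const_nhds htend2).symm
  have hIicu : ν (Iic u) = 1 := by
    have hIoi : ν (Ioi u) = 0 := by
      refine measure_mono_null (fun x hx => ?_) hAc
      intro hxA
      exact absurd (le_csSup hbdd_above hxA) (not_le.mpr hx)
    rw [← compl_Iic] at hIoi
    exact (prob_compl_eq_zero_iff measurableSet_Iic).mp hIoi
  have hc1 : c = 1 := by
    by_cases hu : u ∈ A
    · rw [← hu.2, hIicu]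
    · obtain ⟨x, hmono, htend, hmem⟩ := exists_seq_tendsto_sSup hne hbdd_above
      have hlt : ∀ n, x n < u := fun n =>
        lt_of_le_of_ne (le_csSup hbdd_above (hmem n)) (fun he => hu (he ▸ hmem n))
      have hseteq : Iio u = ⋃ n, Iic (x n) := by
        ext y
        simp only [mem_Iio, mem_iUnion, mem_Iic]
        constructor
        · intro hy
          obtain ⟨n, hn⟩ := (htend.eventually_mem (Ioi_mem_nhds hy)).exists
          exact ⟨n, le_of_lt hn⟩
        · rintro ⟨n, hn⟩; exact lt_of_le_of_lt hn (hlt n)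
      have htend2 : Tendsto (fun n => ν (Iic (x n))) atTop (𝓝 (ν (⋃ n, Iic (x n)))) :=
        tendsto_measure_iUnion_atTop (fun i j hij => Iic_subset_Iic.mpr (hmono hij))
      have hconst : (fun n => ν (Iic (x n))) = fun _ => c := funext fun n => (hmem n).2
      rw [hconst] at htend2
      have hIiou : ν (Iio u) = c := by
        rw [hseteq]; exact (tendsto_nhds_unique tendsto_const_nhds htend2).symm
      have hsing : ν {u} = 0 :=
        measure_mono_null (fun x hx => (mem_singleton_iff.mp hx) ▸ hu) hAc
      have hsplit : ν (Iic u) = ν (Iio u) + ν {u} := by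
        rw [← Iio_union_right]
        exact measure_union (by simp [disjoint_left]; exact fun a ha => ne_of_lt ha) (measurableSet_singleton u)
      rw [hIicu, hIiou, hsing, add_zero] at hsplit
      exact hsplit.symm
  refine ⟨t, eq_dirac_of_singleton_one ν ?_⟩
  have hsplit : ν (Iic t) = ν (Iio t) + ν {t} := by
    rw [← Iio_union_right]
    exact measure_union (by simp [disjoint_left]; exact fun a ha => ne_of_lt ha) (measurableSet_singleton t)
  rw [hIict, hIio, hc1, zero_add] at hsplit
  exact hsplit.symm

open scoped unitInterval

lemma dirac_of_ae_cdf_const' (ν : Measure unitInterval) [IsProbabilityMeasure ν] (c : ℝ≥0∞)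
    (h : ∀ᵐ x ∂ν, ν (Iic x) = c) : ∃ t : unitInterval, ν = Measure.dirac t := by
  have hval : Measurable (Subtype.val : unitInterval → ℝ) := measurable_subtype_coe
  haveI : IsProbabilityMeasure (ν.map Subtype.val) :=
    Measure.isProbabilityMeasure_map hval.aemeasurable
  have key : ∀ x : unitInterval, (ν.map Subtype.val) (Iic (x:ℝ)) = ν (Iic x) := by
    intro x
    rw [Measure.map_apply hval measurableSet_Iic]
    have hpre : (Subtype.val : unitInterval → ℝ) ⁻¹' (Iic (x:ℝ)) = Iic x := by
      ext y; simp [Subtype.coe_le_coe]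
    rw [hpre]
  have hsupp : ∀ᵐ y ∂(ν.map Subtype.val), y ∈ Icc (0:ℝ) 1 := by
    refine ae_iff.mpr ?_
    have hset : {y : ℝ | ¬ y ∈ Icc (0:ℝ) 1} = (Icc (0:ℝ) 1)ᶜ := rfl
    rw [hset, Measure.map_apply hval measurableSet_Icc.compl]
    have : (Subtype.val : unitInterval → ℝ) ⁻¹' (Icc (0:ℝ) 1)ᶜ = ∅ := by
      ext y
      simp only [mem_preimage, mem_compl_iff, mem_empty_iff_false, iff_false, not_not]
      exact y.2
    rw [this]; exact measure_empty
  have hcdfmeas : MeasurableSet {y : ℝ | (ν.map Subtype.val) (Iic y) = c} := by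
    have hmono : Monotone (fun y : ℝ => (ν.map Subtype.val) (Iic y)) :=
      fun a b hab => measure_mono (Iic_subset_Iic.mpr hab)
    exact hmono.measurable (measurableSet_singleton c)
  have hae2 : ∀ᵐ y ∂(ν.map Subtype.val), (ν.map Subtype.val) (Iic y) = c := by
    rw [ae_map_iff hval.aemeasurable hcdfmeas]
    filter_upwards [h] with x hx
    rw [key x, hx]
  obtain ⟨t, hdir⟩ := dirac_of_ae_cdf_const (ν.map Subtype.val) c hsupp hae2
  have h2 : ν (Subtype.val ⁻¹' {t}) = 1 := by
    rw [← Measure.map_apply hval (measurableSet_singleton t), hdir]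
    simp
  have ht : t ∈ unitInterval := by
    by_contra hnot
    have : Subtype.val ⁻¹' ({t} : Set ℝ) = (∅ : Set unitInterval) := by
      ext y; simp only [mem_preimage, mem_singleton_iff, mem_empty_iff_false, iff_false]
      rintro rfl; exact hnot y.2
    rw [this] at h2
    simp at h2
  refine ⟨⟨t, ht⟩, eq_dirac_of_singleton_one ν ?_⟩
  have : Subtype.val ⁻¹' ({t} : Set ℝ) = ({⟨t, ht⟩} : Set unitInterval) := by
    ext y; simp [Subtype.ext_iff]
  rwa [this] at h2

open ProbabilityTheory


/-- For a skew product `F(θ,x) = (S θ, f θ x)` over a homeomorphism `S` of a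
compact metric space `Θ`, with strictly increasing `C²` fiber maps `f θ : [0,1] → (0,1)`,
every ergodic `F`-invariant Borel probability measure `μ` projecting to `m` on the base is
the graph measure `m_γ` of some `(F,m)`-invariant graph `γ`. -/
theorem exists_invariant_graph_of_ergodic
    {Θ : Type*} [MetricSpace Θ] [CompactSpace Θ] [MeasurableSpace Θ] [BorelSpace Θ]
    (S : Θ ≃ₜ Θ) (m : Measure Θ) [IsProbabilityMeasure m]
    (hm : MeasurePreserving S m m)
    (f : Θ → ℝ → ℝ)
    (hmaps : ∀ θ, MapsTo (f θ) unitInterval (Ioo (0 : ℝ) 1))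
    (hcont : Continuous fun p : Θ × unitInterval => f p.1 p.2)
    (hmono : ∀ θ, StrictMonoOn (f θ) unitInterval)
    (hC2 : ∀ θ, ContDiffOn ℝ 2 (f θ) unitInterval)
    (F : Θ × unitInterval → Θ × unitInterval)
    (hF : ∀ p : Θ × unitInterval,
      F p = (S p.1, ⟨f p.1 p.2, Ioo_subset_Icc_self (hmaps p.1 p.2.2)⟩))
    (μ : Measure (Θ × unitInterval)) [IsProbabilityMeasure μ]
    (hμerg : Ergodic F μ)
    (hmarg : μ.map Prod.fst = m) :
    ∃ γ : Θ → unitInterval, Measurable γ ∧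
      (∀ᵐ θ ∂m, f θ (γ θ) = (γ (S θ) : ℝ)) ∧
      μ = m.map fun θ => (θ, γ θ) := by
  classical
  set fr : Θ → unitInterval → unitInterval :=
    fun θ x => ⟨f θ x, Ioo_subset_Icc_self (hmaps θ x.2)⟩ with hfrdef
  have hfrcont : Continuous (fun p : Θ × unitInterval => fr p.1 p.2) :=
    hcont.subtype_mk _
  have hfrmeas : Measurable (fun p : Θ × unitInterval => fr p.1 p.2) := hfrcont.measurable
  have hfrm1 : ∀ θ, Measurable (fr θ) :=
    fun θ => hfrmeas.comp (measurable_const.prodMk measurable_id)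
  have hfrmono : ∀ θ, StrictMono (fr θ) := by
    intro θ x y hxy
    exact Subtype.mk_lt_mk.mpr (hmono θ x.2 y.2 (Subtype.coe_lt_coe.mpr hxy))
  have hFeq : F = fun p => (S p.1, fr p.1 p.2) := funext hF
  have hFmeas : Measurable F := by
    rw [hFeq]
    exact ((S.continuous.comp continuous_fst).prodMk hfrcont).measurable
  have hfst : μ.fst = m := hmarg
  set κ := μ.condKernel with hκdef
  have hdis : m ⊗ₘ κ = μ := by rw [← hfst]; exact μ.disintegrate _
  -- the transported kernel
  have hκ'meas : Measurable (fun θ => (κ (S.symm θ)).map (fr (S.symm θ))) := by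
    refine Measure.measurable_of_measurable_coe _ (fun s hs => ?_)
    have h1 : ∀ θ, (κ θ).map (fr θ) s = ∫⁻ x, s.indicator 1 (fr θ x) ∂κ θ := by
      intro θ
      rw [Measure.map_apply (hfrm1 θ) hs, ← lintegral_indicator_one ((hfrm1 θ) hs)]
      refine lintegral_congr (fun x => ?_)
      simp [Set.indicator_apply, Set.mem_preimage]
    simp_rw [h1]
    have h2 : Measurable (fun θ => ∫⁻ x, s.indicator 1 (fr θ x) ∂κ θ) :=
      Measurable.lintegral_kernel_prod_right
        ((measurable_one.indicator hs).comp hfrmeas)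
    exact h2.comp S.symm.continuous.measurable
  set κ' : Kernel Θ unitInterval :=
    ⟨fun θ => (κ (S.symm θ)).map (fr (S.symm θ)), hκ'meas⟩ with hκ'def
  have hκ'apply : ∀ θ, κ' θ = (κ (S.symm θ)).map (fr (S.symm θ)) := fun _ => rfl
  haveI : IsMarkovKernel κ' := ⟨fun θ => by
    rw [hκ'apply]
    exact Measure.isProbabilityMeasure_map (hfrm1 _).aemeasurable⟩
  -- μ = m ⊗ₘ κ'
  have hmapF : μ.map F = μ := hμerg.toMeasurePreserving.map_eq
  have hpush : (m ⊗ₘ κ).map F = m ⊗ₘ κ' := by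
    ext s hs
    rw [Measure.map_apply hFmeas hs, Measure.compProd_apply (hFmeas hs),
      Measure.compProd_apply hs]
    have hpt : ∀ θ, κ θ (Prod.mk θ ⁻¹' (F ⁻¹' s)) = κ' (S θ) (Prod.mk (S θ) ⁻¹' s) := by
      intro θ
      rw [hκ'apply, S.symm_apply_apply,
        Measure.map_apply (hfrm1 θ) (measurable_prodMk_left hs)]
      congr 1
      ext x
      simp only [mem_preimage]
      rw [hF (θ, x)]
    calc ∫⁻ θ, κ θ (Prod.mk θ ⁻¹' (F ⁻¹' s)) ∂m
        = ∫⁻ θ, κ' (S θ) (Prod.mk (S θ) ⁻¹' s) ∂m := lintegral_congr hpt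
      _ = ∫⁻ θ, κ' θ (Prod.mk θ ⁻¹' s) ∂m :=
          hm.lintegral_comp (Kernel.measurable_kernel_prodMk_left hs)
  have hcomp : μ = m ⊗ₘ κ' := by
    conv_lhs => rw [← hmapF, ← hdis]
    exact hpush
  have huniq : ∀ᵐ θ ∂m, κ' θ = κ θ := by
    have h := ProbabilityTheory.eq_condKernel_of_measure_eq_compProd κ'
      (by rw [hfst]; exact hcomp)
    rw [hfst] at h
    exact h
  have hinv : ∀ᵐ θ ∂m, (κ θ).map (fr θ) = κ (S θ) := by
    have h2 := hm.quasiMeasurePreserving.ae huniq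
    filter_upwards [h2] with θ hθ
    rw [← hθ, hκ'apply, S.symm_apply_apply]
  -- the conditional CDF is F-invariant
  set G : Θ × unitInterval → ℝ≥0∞ := fun p => κ p.1 (Iic p.2) with hGdef
  have hGmeas : Measurable G := by
    set T : Set ((Θ × unitInterval) × unitInterval) := {q | (q.2:ℝ) ≤ (q.1.2:ℝ)} with hTdef
    have hTmeas : MeasurableSet T :=
      measurableSet_le (measurable_subtype_coe.comp measurable_snd)
        (measurable_subtype_coe.comp (measurable_snd.comp measurable_fst))
    set κ2 : Kernel (Θ × unitInterval) unitInterval :=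
      κ.comap Prod.fst measurable_fst with hκ2def
    have h1 : ∀ p : Θ × unitInterval,
        G p = ∫⁻ y, T.indicator (fun _ => (1:ℝ≥0∞)) (p, y) ∂κ2 p := by
      intro p
      rw [Kernel.comap_apply]
      have heq : ∀ y : unitInterval, T.indicator (fun _ => (1:ℝ≥0∞)) (p, y)
          = (Iic p.2).indicator (fun _ => (1:ℝ≥0∞)) y := by
        intro y
        have hmem : ((p, y) ∈ T) ↔ (y ∈ Iic p.2) := by
          simp only [hTdef, mem_setOf_eq, mem_Iic, Subtype.coe_le_coe]
        simp only [Set.indicator_apply, hmem]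
      simp_rw [heq]
      have := lintegral_indicator_one (μ := κ p.1) (measurableSet_Iic (a := p.2))
      simp [hGdef]
    have hGeq : G = fun p => ∫⁻ y, T.indicator (fun _ => (1:ℝ≥0∞)) (p, y) ∂κ2 p :=
      funext h1
    rw [hGeq]
    exact Measurable.lintegral_kernel_prod_right'
      ((measurable_one.indicator hTmeas) : Measurable (T.indicator (fun _ => (1:ℝ≥0∞))))
  have hbase : ∀ᵐ p : Θ × unitInterval ∂μ, (κ p.1).map (fr p.1) = κ (S p.1) := by
    have hqmp : Measure.QuasiMeasurePreserving Prod.fst μ m :=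
      ⟨measurable_fst, by rw [hmarg]⟩
    exact hqmp.ae hinv
  have hGinv : G ∘ F =ᵐ[μ] G := by
    filter_upwards [hbase] with p hp
    show G (F p) = G p
    rw [hF p]
    show κ (S p.1) (Iic (fr p.1 p.2)) = κ p.1 (Iic p.2)
    rw [← hp, Measure.map_apply (hfrm1 p.1) measurableSet_Iic]
    congr 1
    ext y
    simp only [mem_preimage, mem_Iic]
    exact (hfrmono p.1).le_iff_le
  obtain ⟨c, hc⟩ := hμerg.ae_eq_const_of_ae_eq_comp₀ hGmeas.nullMeasurable hGinv
  have hcc : ∀ᵐ θ ∂m, ∀ᵐ x ∂κ θ, κ θ (Iic x) = c := by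
    have h2 : ∀ᵐ p ∂(m ⊗ₘ κ), G p = c := by rw [hdis]; exact hc
    exact Measure.ae_ae_of_ae_compProd h2
  have hdirac : ∀ᵐ θ ∂m, ∃ t, κ θ = Measure.dirac t := by
    filter_upwards [hcc] with θ hθ
    exact dirac_of_ae_cdf_const' (κ θ) c hθ
  -- the graph
  have hint_le : ∀ θ, (∫⁻ x : unitInterval, ENNReal.ofReal (x:ℝ) ∂κ θ) ≤ 1 := by
    intro θ
    calc (∫⁻ x : unitInterval, ENNReal.ofReal (x:ℝ) ∂κ θ)
        ≤ ∫⁻ _ : unitInterval, 1 ∂κ θ :=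
          lintegral_mono (fun x => ENNReal.ofReal_le_one.mpr x.2.2)
      _ = 1 := by simp [measure_univ]
  set γ : Θ → unitInterval := fun θ =>
    ⟨(∫⁻ x : unitInterval, ENNReal.ofReal (x:ℝ) ∂κ θ).toReal,
      ENNReal.toReal_nonneg, by
        calc (∫⁻ x : unitInterval, ENNReal.ofReal (x:ℝ) ∂κ θ).toReal
            ≤ (1:ℝ≥0∞).toReal := ENNReal.toReal_mono ENNReal.one_ne_top (hint_le θ)
          _ = 1 := by simp⟩ with hγdef
  have hγmeas : Measurable γ :=
    Measurable.subtype_mk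
      ((Measurable.lintegral_kernel (measurable_subtype_coe.ennreal_ofReal)).ennreal_toReal)
  have hκγ : ∀ᵐ θ ∂m, κ θ = Measure.dirac (γ θ) := by
    filter_upwards [hdirac] with θ hθ
    obtain ⟨t, ht⟩ := hθ
    have hγt : γ θ = t := by
      apply Subtype.ext
      show (∫⁻ x : unitInterval, ENNReal.ofReal (x:ℝ) ∂κ θ).toReal = (t:ℝ)
      rw [ht, lintegral_dirac' _ (measurable_subtype_coe.ennreal_ofReal)]
      exact ENNReal.toReal_ofReal t.2.1
    rw [ht, hγt]
  have hgm : Measurable (fun θ => (θ, γ θ)) := measurable_id.prodMk hγmeas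
  have hdet : μ = m.map (fun θ => (θ, γ θ)) := by
    have h1 : m ⊗ₘ κ = m ⊗ₘ Kernel.deterministic γ hγmeas := by
      apply Measure.compProd_congr
      filter_upwards [hκγ] with θ hθ
      rw [Kernel.deterministic_apply, hθ]
    rw [← hdis, h1]
    ext s hs
    rw [Measure.compProd_apply hs, Measure.map_apply hgm hs]
    have h2 : ∀ θ, (Kernel.deterministic γ hγmeas) θ (Prod.mk θ ⁻¹' s)
        = ((fun θ => (θ, γ θ)) ⁻¹' s).indicator 1 θ := by
      intro θ
      rw [Kernel.deterministic_apply, Measure.dirac_apply' _ (measurable_prodMk_left hs)]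
      simp [Set.indicator_apply, Set.mem_preimage]
    simp_rw [h2]
    rw [lintegral_indicator_one (hgm hs)]
  have hκSγ : ∀ᵐ θ ∂m, κ (S θ) = Measure.dirac (γ (S θ)) :=
    hm.quasiMeasurePreserving.ae hκγ
  have hfinal : ∀ᵐ θ ∂m, f θ (γ θ) = (γ (S θ) : ℝ) := by
    filter_upwards [hinv, hκγ, hκSγ] with θ h1 h2 h3
    rw [h2, Measure.map_dirac' (hfrm1 θ), h3] at h1
    have heq : fr θ (γ θ) = γ (S θ) := by
      by_contra hne
      have h4 := congrArg (fun ν : Measure unitInterval => ν {γ (S θ)}) h1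
      simp only [Measure.dirac_apply' _ (measurableSet_singleton _),
        Set.indicator_apply, mem_singleton_iff] at h4
      simp [hne] at h4
    exact congrArg Subtype.val heq
  exact ⟨γ, hγmeas, hfinal, hdet⟩
end

section
/- Let Θ be a compact metric space, S : Θ → Θ a homeomorphism, I = [0,1], and F(θ,x) = (S(θ), f_θ(x)) a skew product on Θ × I such that (θ,x) ↦ f_θ(x) is continuous and each fiber map f_θ : I → (0,1) is a strictly increasing continuous map. Let A = ⋂_{n≥0} Fⁿ(Θ × I) be the maximal attractor with fibers A_θ, let Θ₀ ⊆ Θ be the set of θ for which A_θ is a single point, and let γ : Θ₀ → I assign to each θ ∈ Θ₀ the unique point of A_θ (the graph function). Then there exists an upper semicontinuous function γ̄ : Θ → I extending γ to the whole space Θ, i.e. γ̄(θ) ∈ A_θ for every θ ∈ Θ and γ̄(θ) = γ(θ) for every θ ∈ Θ₀. -/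
open MeasureTheory Set Filter Topology

/-- for a continuous skew product over a homeomorphism of a compact metric space
with strictly increasing continuous fiber maps `f θ : [0,1] → (0,1)`, the graph function
`γ`, defined on the set `Θ₀` of base points whose maximal-attractor fiber
`A_θ = {x | (θ,x) ∈ ⋂_{n≥0} Fⁿ(Θ × I)}` is a single point, admits an upper semicontinuous
extension `γ̄ : Θ → ℝ` with `γ̄ θ ∈ A_θ` for every `θ`. -/
theorem graph_function_usc_extension
    {Θ : Type*} [MetricSpace Θ] [CompactSpace Θ]
    (S : Θ ≃ₜ Θ)
    (f : Θ → ℝ → ℝ)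
    (hmaps : ∀ θ, MapsTo (f θ) (Icc (0 : ℝ) 1) (Ioo (0 : ℝ) 1))
    (hcont : ContinuousOn (fun p : Θ × ℝ => f p.1 p.2) (univ ×ˢ Icc (0 : ℝ) 1))
    (hmono : ∀ θ, StrictMonoOn (f θ) (Icc (0 : ℝ) 1))
    (F : Θ × ℝ → Θ × ℝ) (hF : ∀ p : Θ × ℝ, F p = (S p.1, f p.1 p.2)) :
    ∃ γbar : Θ → ℝ, UpperSemicontinuous γbar ∧
      (∀ θ : Θ, (θ, γbar θ) ∈ ⋂ n : ℕ, F^[n] '' (univ ×ˢ Icc (0 : ℝ) 1)) ∧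
      ∀ θ : Θ, ∀ x : ℝ,
        {y : ℝ | (θ, y) ∈ ⋂ n : ℕ, F^[n] '' (univ ×ˢ Icc (0 : ℝ) 1)} = {x} → γbar θ = x := by
  set K : Set (Θ × ℝ) := univ ×ˢ Icc (0:ℝ) 1 with hKdef
  have hKc : IsCompact K := isCompact_univ.prod isCompact_Icc
  have hFK : MapsTo F K K := by
    intro p hp
    rw [hF]
    exact ⟨mem_univ _, Ioo_subset_Icc_self (hmaps p.1 hp.2)⟩
  have hFcont : ContinuousOn F K := by
    have : ContinuousOn (fun p : Θ × ℝ => (S p.1, f p.1 p.2)) K :=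
      ContinuousOn.prodMk ((S.continuous.comp continuous_fst).continuousOn) hcont
    exact this.congr fun p _ => hF p
  have hsub : ∀ n, F^[n] '' K ⊆ K := fun n => (hFK.iterate n).image_subset
  have hcomp : ∀ n, IsCompact (F^[n] '' K) := by
    intro n
    induction n with
    | zero => simpa using hKc
    | succ n ih =>
      rw [Function.iterate_succ', Set.image_comp]
      exact ih.image_of_continuousOn (hFcont.mono (hsub n))
  have hanti : ∀ n, F^[n+1] '' K ⊆ F^[n] '' K := by
    intro n
    rw [Function.iterate_succ, Set.image_comp]
    exact image_mono hFK.image_subset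
  -- first coordinate of the iterate
  have hfst : ∀ (n : ℕ) (p : Θ × ℝ), (F^[n] p).1 = (⇑S)^[n] p.1 := by
    intro n
    induction n with
    | zero => intro p; rfl
    | succ n ih =>
      intro p
      rw [Function.iterate_succ_apply, Function.iterate_succ_apply, ih, hF]
  -- nonempty fibers of each iterate image
  have hfib_ne : ∀ (θ : Θ) (n : ℕ), {y : ℝ | (θ, y) ∈ F^[n] '' K}.Nonempty := by
    intro θ n
    obtain ⟨θ', hθ'⟩ : ∃ θ', (⇑S)^[n] θ' = θ :=
      ⟨(⇑S.symm)^[n] θ, (Function.LeftInverse.iterate S.apply_symm_apply n) θ⟩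
    refine ⟨(F^[n] (θ', 0)).2, ?_⟩
    have h1 : (F^[n] (θ', 0)).1 = θ := by rw [hfst]; exact hθ'
    have h2 : F^[n] (θ', 0) ∈ F^[n] '' K :=
      mem_image_of_mem _ ⟨mem_univ _, by norm_num⟩
    show (θ, (F^[n] (θ', 0)).2) ∈ F^[n] '' K
    rw [← h1]
    exact h2
  -- fibers of iterate images are closed
  have hfib_cl : ∀ (θ : Θ) (n : ℕ), IsClosed {y : ℝ | (θ, y) ∈ F^[n] '' K} :=
    fun θ n => (hcomp n).isClosed.preimage (continuous_const.prodMk continuous_id)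
  have hAset : ∀ θ : Θ, {y : ℝ | (θ, y) ∈ ⋂ n : ℕ, F^[n] '' K}
      = ⋂ n : ℕ, {y : ℝ | (θ, y) ∈ F^[n] '' K} := by
    intro θ; ext y; simp [mem_iInter]
  -- fibers of the attractor are nonempty
  have hAne : ∀ θ : Θ, {y : ℝ | (θ, y) ∈ ⋂ n : ℕ, F^[n] '' K}.Nonempty := by
    intro θ
    rw [hAset]
    refine IsCompact.nonempty_iInter_of_sequence_nonempty_isCompact_isClosed _
      (fun n y hy => hanti n hy) (hfib_ne θ) ?_ (hfib_cl θ)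
    have h0 : {y : ℝ | (θ, y) ∈ F^[0] '' K} = Icc (0:ℝ) 1 := by
      ext y; simp [hKdef]
    rw [h0]; exact isCompact_Icc
  -- fibers of the attractor are compact
  have hAcomp : ∀ θ : Θ, IsCompact {y : ℝ | (θ, y) ∈ ⋂ n : ℕ, F^[n] '' K} := by
    intro θ
    refine IsCompact.of_isClosed_subset (isCompact_Icc (a := (0:ℝ)) (b := 1)) ?_ ?_
    · rw [hAset]; exact isClosed_iInter (hfib_cl θ)
    · intro y hy
      have := (mem_iInter.1 hy) 0
      simpa [hKdef] using (hsub 0) this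
  -- global attractor compact
  have hAttr : IsCompact (⋂ n : ℕ, F^[n] '' K) := by
    refine IsCompact.of_isClosed_subset hKc (isClosed_iInter fun n => (hcomp n).isClosed) ?_
    exact (iInter_subset _ 0).trans (by simpa using hsub 0)
  refine ⟨fun θ => sSup {y : ℝ | (θ, y) ∈ ⋂ n : ℕ, F^[n] '' K}, ?_, ?_, ?_⟩
  · -- upper semicontinuity
    rw [upperSemicontinuous_iff_isOpen_preimage]
    intro c
    have hset : (fun θ : Θ => sSup {y : ℝ | (θ, y) ∈ ⋂ n : ℕ, F^[n] '' K}) ⁻¹' Iio c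
        = (Prod.fst '' ((⋂ n : ℕ, F^[n] '' K) ∩ univ ×ˢ Ici c))ᶜ := by
      ext θ
      simp only [mem_preimage, mem_Iio, mem_compl_iff, mem_image, not_exists, mem_inter_iff,
        mem_prod, mem_univ, true_and, mem_Ici, not_and]
      constructor
      · rintro hlt p ⟨hpA, hpc⟩ hp1
        have hy : (θ, p.2) ∈ ⋂ n : ℕ, F^[n] '' K := by
          rw [← hp1]; exact hpA
        have := le_csSup (hAcomp θ).bddAbove (show p.2 ∈ {y : ℝ | (θ, y) ∈ ⋂ n : ℕ, F^[n] '' K} from hy)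
        linarith
      · intro h
        have hmem := (hAcomp θ).sSup_mem (hAne θ)
        by_contra hc
        push_neg at hc
        exact absurd rfl (h _ ⟨hmem, hc⟩)
    rw [hset]
    exact (((hAttr.inter_right (isClosed_univ.prod isClosed_Ici)).image
      continuous_fst).isClosed).isOpen_compl
  · -- membership
    intro θ
    exact (hAcomp θ).sSup_mem (hAne θ)
  · -- agrees with γ on singleton fibers
    intro θ x hx
    show sSup {y : ℝ | (θ, y) ∈ ⋂ n : ℕ, F^[n] '' K} = x
    rw [hx, csSup_singleton]
end

section
/- For every t ∈ 𝕋, the topological entropy of the shift S on the fiber p⁻¹(t) ⊆ Ω is zero: h_top(S, p⁻¹(t)) := lim_{ε→0} limsup_{n→∞} (1/n) log sup{ #E : E ⊆ p⁻¹(t) is (ε,n)-separated for S } = 0. -/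
open MeasureTheory Set Filter Topology

/-- The expanding circle map `ω(t) = 4t (mod 1)` on `𝕋 = ℝ/ℤ`. -/
noncomputable def circleExp : AddCircle (1 : ℝ) → AddCircle (1 : ℝ) := fun t => (4 : ℕ) • t

/-- A metric on the countable product `𝕋^ℕ` compatible with the product topology. -/
noncomputable instance : MetricSpace (ℕ → AddCircle (1 : ℝ)) := PiCountable.metricSpace

/-- The solenoid `Ω`: the inverse limit of `ω`, i.e. sequences `(t₋ₙ)ₙ` of pre-images with
`ω(t₋ₙ₋₁) = t₋ₙ`, equipped with (a metric compatible with) the product topology. -/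
def Solenoid : Type := { u : ℕ → AddCircle (1 : ℝ) // ∀ n : ℕ, circleExp (u (n + 1)) = u n }

noncomputable instance : MetricSpace Solenoid := Subtype.metricSpace

/-- The shift homeomorphism `S(…, t₋₁, t₀) = (…, t₋₁, t₀, ω(t₀))` on the solenoid. -/
noncomputable def solShift (u : Solenoid) : Solenoid :=
  ⟨fun n => Nat.casesOn n (circleExp (u.1 0)) (fun k => u.1 k), by
    intro n
    cases n with
    | zero => rfl
    | succ k => exact u.2 k⟩

/-- The projection `p : Ω → 𝕋`, `p((t₋ₙ)ₙ) = t₀`. -/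
def solProj (u : Solenoid) : AddCircle (1 : ℝ) := u.1 0

lemma dist_pi_eq (x y : ℕ → AddCircle (1:ℝ)) :
    dist x y = ∑' i : ℕ, min ((1/2)^i : ℝ) (dist (x i) (y i)) := by
  rw [PiCountable.dist_eq_tsum]
  simp [Encodable.encode_nat]

lemma summable_aux (x y : ℕ → AddCircle (1:ℝ)) :
    Summable (fun i : ℕ => min ((1/2)^i : ℝ) (dist (x i) (y i))) := by
  have := PiCountable.dist_summable x y
  simpa [Encodable.encode_nat] using this

lemma shift_dist_le (u v : Solenoid) (h : u.1 0 = v.1 0) :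
    dist (solShift u) (solShift v) ≤ dist u v := by
  have hd : dist (solShift u) (solShift v) = dist (solShift u).1 (solShift v).1 := rfl
  have hd' : dist u v = dist u.1 v.1 := rfl
  rw [hd, hd', dist_pi_eq, dist_pi_eq]
  rw [Summable.tsum_eq_zero_add (summable_aux (solShift u).1 (solShift v).1)]
  have h0 : min ((1/2)^(0:ℕ) : ℝ) (dist ((solShift u).1 0) ((solShift v).1 0)) = 0 := by
    have : (solShift u).1 0 = (solShift v).1 0 := by
      show circleExp (u.1 0) = circleExp (v.1 0)
      rw [h]
    simp [this]
  rw [h0, zero_add]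
  refine Summable.tsum_le_tsum (fun k => ?_) ((summable_aux (solShift u).1 (solShift v).1).comp_injective
    (add_left_injective 1)) (summable_aux u.1 v.1)
  have : (solShift u).1 (k+1) = u.1 k := rfl
  have h2 : (solShift v).1 (k+1) = v.1 k := rfl
  rw [this, h2]
  exact min_le_min (pow_le_pow_of_le_one (by norm_num) (by norm_num) (Nat.le_succ k)) le_rfl

lemma iter_fiber_dist (i : ℕ) (u v : Solenoid) (h : u.1 0 = v.1 0) :
    (solShift^[i] u).1 0 = (solShift^[i] v).1 0 ∧
      dist (solShift^[i] u) (solShift^[i] v) ≤ dist u v := by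
  induction i with
  | zero => exact ⟨h, le_rfl⟩
  | succ k ih =>
    rw [Function.iterate_succ_apply', Function.iterate_succ_apply']
    refine ⟨?_, le_trans (shift_dist_le _ _ ih.1) ih.2⟩
    show circleExp _ = circleExp _
    rw [ih.1]

lemma solenoid_totallyBounded : TotallyBounded (univ : Set Solenoid) := by
  haveI : Fact ((0:ℝ) < 1) := ⟨one_pos⟩
  have hiso : IsUniformInducing (Subtype.val : Solenoid → (ℕ → AddCircle (1:ℝ))) := by
    have : Isometry (Subtype.val : Solenoid → (ℕ → AddCircle (1:ℝ))) := fun _ _ => rfl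
    exact this.isUniformInducing
  refine (totallyBounded_image_iff hiso).mp ?_
  exact (isCompact_univ.totallyBounded).subset (subset_univ _)

/-- for every `t ∈ 𝕋` the topological entropy of the shift `S` on the fiber
`p⁻¹(t)` is zero, i.e. `lim_{ε→0} limsup_n (1/n) log sup{#E : E ⊆ p⁻¹(t) (ε,n)-separated} = 0`.
Equivalently (since the quantity under the limits is monotone in `ε` and nonnegative): for
every `ε > 0` and every `c > 0`, eventually in `n` every `(ε,n)`-separated subset `E` of
`p⁻¹(t)` (i.e. any two distinct points of `E` are `ε`-apart in the Bowen metric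
`d_n(x,y) = max_{0 ≤ i < n} d(Sⁱx, Sⁱy)`) has cardinality at most `exp(c·n)`. -/
theorem solenoid_fiber_topological_entropy_zero (t : AddCircle (1 : ℝ)) :
    ∀ ε > (0 : ℝ), ∀ c > (0 : ℝ), ∃ N : ℕ, ∀ n ≥ N, ∀ E : Finset Solenoid,
      (∀ u ∈ E, solProj u = t) →
      (∀ x ∈ E, ∀ y ∈ E, x ≠ y →
        ∃ i < n, ε ≤ dist (solShift^[i] x) (solShift^[i] y)) →
      (E.card : ℝ) ≤ Real.exp (c * n) := by
  intro ε hε c hc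
  obtain ⟨s, hsfin, hscov⟩ := Metric.totallyBounded_iff.mp solenoid_totallyBounded (ε/2)
    (by positivity)
  set M : ℕ := hsfin.toFinset.card with hM
  refine ⟨Nat.ceil (Real.log (M+1) / c), fun n hn E hfib hsep => ?_⟩
  -- separated in the plain metric
  have key : ∀ x ∈ E, ∀ y ∈ E, x ≠ y → ε ≤ dist x y := by
    intro x hx y hy hxy
    obtain ⟨i, -, hi⟩ := hsep x hx y hy hxy
    have hfx : x.1 0 = y.1 0 := by
      have h1 := hfib x hx; have h2 := hfib y hy
      simp only [solProj] at h1 h2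
      rw [h1, h2]
    exact hi.trans ((iter_fiber_dist i x y hfx).2)
  -- injection into the net
  have hcard : E.card ≤ M := by
    have hchoice : ∀ x : Solenoid, ∃ y ∈ hsfin.toFinset, dist x y < ε/2 := by
      intro x
      have := hscov (mem_univ x)
      simp only [mem_iUnion, Metric.mem_ball] at this
      obtain ⟨y, hy, hd⟩ := this
      exact ⟨y, hsfin.mem_toFinset.mpr hy, hd⟩
    choose f hf hfd using hchoice
    refine Finset.card_le_card_of_injOn f (fun x _ => hf x) ?_
    intro x hx y hy hfxy
    by_contra hne
    have : dist x y < ε :=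
      calc dist x y ≤ dist x (f x) + dist (f y) y := by
            rw [hfxy]; exact dist_triangle _ _ _
        _ < ε/2 + ε/2 := add_lt_add (hfd x) (by rw [dist_comm]; exact hfd y)
        _ = ε := by ring
    exact absurd (key x hx y hy hne) (not_le.mpr this)
  have hlog : Real.log (M+1) ≤ c * n := by
    have h1 : Real.log (M+1) / c ≤ (n : ℝ) := by
      refine le_trans (Nat.le_ceil _) ?_
      exact_mod_cast hn
    calc Real.log (M+1) = (Real.log (M+1) / c) * c := by field_simp
      _ ≤ (n:ℝ) * c := mul_le_mul_of_nonneg_right h1 hc.le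
      _ = c * n := mul_comm _ _
  calc (E.card : ℝ) ≤ M := by exact_mod_cast hcard
    _ ≤ M + 1 := by linarith
    _ = Real.exp (Real.log (M+1)) := by
        rw [Real.exp_log]; positivity
    _ ≤ Real.exp (c * n) := Real.exp_le_exp.mpr hlog
end

section
/- Let Θ be a compact metric space, S : Θ → Θ a homeomorphism, m an ergodic S-invariant Borel probability measure, I = [0,1], and F(θ,x) = (S(θ), f_θ(x)) a skew product on Θ × I such that (θ,x) ↦ f_θ(x) is continuous and each f_θ is C¹ with (θ,x) ↦ Df_θ(x) continuous and strictly positive. Let γ be an (F,m)-invariant graph whose fiber Lyapunov exponent is negative: λ_m(γ) = ∫_Θ log Df_θ(γ(θ)) dm(θ) < 0. Then γ is attracting with respect to m_γ: for m-a.e. θ there exists δ > 0 such that for every z ∈ I with |z − γ(θ)| < δ one has |f_θⁿ(z) − f_θⁿ(γ(θ))| → 0 as n → ∞. -/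
open MeasureTheory Set Filter Topology

/-- The fiber iterates of a skew product: `fiberIter S f n θ = f_θⁿ = f_{S^{n-1}θ} ∘ ⋯ ∘ f_θ`. -/
def fiberIter {Θ X : Type*} (S : Θ → Θ) (f : Θ → X → X) : ℕ → Θ → X → X
  | 0, _, x => x
  | n + 1, θ, x => f (S^[n] θ) (fiberIter S f n θ x)

section Garsia

variable {Θ : Type*} [MeasurableSpace Θ]

/-- Running maximum `max (0, max_{1 ≤ n ≤ N} S_n ψ)` of Birkhoff sums, defined recursively. -/
noncomputable def maxBirk (S : Θ → Θ) (ψ : Θ → ℝ) : ℕ → Θ → ℝ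
  | 0, _ => 0
  | N + 1, θ => max 0 (ψ θ + maxBirk S ψ N (S θ))

lemma maxBirk_nonneg (S : Θ → Θ) (ψ : Θ → ℝ) (N : ℕ) (θ : Θ) : 0 ≤ maxBirk S ψ N θ := by
  cases N with
  | zero => simp [maxBirk]
  | succ N => exact le_max_left _ _

lemma maxBirk_mono (S : Θ → Θ) (ψ : Θ → ℝ) :
    ∀ N θ, maxBirk S ψ N θ ≤ maxBirk S ψ (N + 1) θ := by
  intro N
  induction N with
  | zero => intro θ; exact maxBirk_nonneg S ψ 1 θ
  | succ N ih =>
    intro θ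
    show max 0 (ψ θ + maxBirk S ψ N (S θ)) ≤ max 0 (ψ θ + maxBirk S ψ (N + 1) (S θ))
    exact max_le_max le_rfl (add_le_add le_rfl (ih (S θ)))

lemma birkhoffSum_le_maxBirk (S : Θ → Θ) (ψ : Θ → ℝ) :
    ∀ n N θ, n ≤ N → birkhoffSum S ψ n θ ≤ maxBirk S ψ N θ := by
  intro n
  induction n with
  | zero => intro N θ _; simpa [birkhoffSum] using maxBirk_nonneg S ψ N θ
  | succ n ih =>
    intro N θ hn
    cases N with
    | zero => omega
    | succ N =>
      rw [birkhoffSum_succ']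
      calc ψ θ + birkhoffSum S ψ n (S θ) ≤ ψ θ + maxBirk S ψ N (S θ) :=
            add_le_add le_rfl (ih N (S θ) (Nat.succ_le_succ_iff.1 hn))
        _ ≤ max 0 (ψ θ + maxBirk S ψ N (S θ)) := le_max_right _ _
        _ = maxBirk S ψ (N + 1) θ := rfl

lemma maxBirk_measurable {S : Θ → Θ} (hS : Measurable S) {ψ : Θ → ℝ} (hψ : Measurable ψ) :
    ∀ N, Measurable (maxBirk S ψ N) := by
  intro N
  induction N with
  | zero => exact measurable_const
  | succ N ih =>
    exact measurable_const.max (hψ.add (ih.comp hS))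

lemma birkhoffSum_measurable {S : Θ → Θ} (hS : Measurable S) {ψ : Θ → ℝ} (hψ : Measurable ψ)
    (n : ℕ) : Measurable (fun θ => birkhoffSum S ψ n θ) := by
  simp only [birkhoffSum]
  exact Finset.measurable_sum _ (fun i _ => hψ.comp (hS.iterate i))

/-- Garsia-style maximal ergodic argument: if `ψ` is bounded measurable with negative mean
over an ergodic system, then a.e. the Birkhoff sums of `ψ` are bounded above. -/
lemma garsia {S : Θ → Θ} {m : Measure Θ} [IsProbabilityMeasure m]
    (hS : Ergodic S m) {ψ : Θ → ℝ} (hψ : Measurable ψ)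
    {B : ℝ} (hB : ∀ θ, |ψ θ| ≤ B) (hint : ∫ θ, ψ θ ∂m < 0) :
    ∀ᵐ θ ∂m, ∃ C : ℝ, ∀ n, birkhoffSum S ψ n θ ≤ C := by
  have hSm : Measurable S := hS.measurable
  have hψint : Integrable ψ m :=
    (integrable_const B).mono' hψ.aestronglyMeasurable
      (ae_of_all _ fun θ => by simpa [Real.norm_eq_abs] using hB θ)
  have hMint : ∀ N, Integrable (maxBirk S ψ N) m := by
    intro N
    induction N with
    | zero =>
      have : (maxBirk S ψ 0) = fun _ => (0 : ℝ) := rfl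
      rw [this]; exact integrable_const 0
    | succ N ih =>
      have h2 : Integrable (fun θ => ψ θ + maxBirk S ψ N (S θ)) m := by
        refine hψint.add ?_
        exact (hS.toMeasurePreserving.integrable_comp
          (maxBirk_measurable hSm hψ N).aestronglyMeasurable).2 ih
      have : (maxBirk S ψ (N + 1)) = fun θ => max 0 (ψ θ + maxBirk S ψ N (S θ)) := rfl
      rw [this]
      exact (integrable_const (0 : ℝ)).sup h2
  set A : ℕ → Set Θ := fun N => {θ | 0 < maxBirk S ψ (N + 1) θ} with hAdef
  have hAm : ∀ N, MeasurableSet (A N) :=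
    fun N => measurableSet_lt measurable_const (maxBirk_measurable hSm hψ (N + 1))
  have key : ∀ N : ℕ, 0 ≤ ∫ θ in A N, ψ θ ∂m := by
    intro N
    have hΨmeas := maxBirk_measurable hSm hψ (N + 1)
    have hΨS : Integrable (fun θ => maxBirk S ψ (N + 1) (S θ)) m :=
      (hS.toMeasurePreserving.integrable_comp hΨmeas.aestronglyMeasurable).2 (hMint (N + 1))
    have h1 : ∀ θ ∈ A N, maxBirk S ψ (N + 1) θ - maxBirk S ψ (N + 1) (S θ) ≤ ψ θ := by
      intro θ hθ
      have hθ' : 0 < maxBirk S ψ (N + 1) θ := hθ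
      have hpos : 0 < ψ θ + maxBirk S ψ N (S θ) := by
        rcases lt_max_iff.1 hθ' with h | h
        · exact absurd h (lt_irrefl 0)
        · exact h
      have h0 : maxBirk S ψ (N + 1) θ = ψ θ + maxBirk S ψ N (S θ) := max_eq_right hpos.le
      have h2 : maxBirk S ψ N (S θ) ≤ maxBirk S ψ (N + 1) (S θ) := maxBirk_mono S ψ N (S θ)
      linarith
    have h2 : ∫ θ in A N, (maxBirk S ψ (N + 1) θ - maxBirk S ψ (N + 1) (S θ)) ∂m
        ≤ ∫ θ in A N, ψ θ ∂m :=
      setIntegral_mono_on ((hMint (N + 1)).sub hΨS).integrableOn hψint.integrableOn (hAm N) h1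
    have h3 : ∫ θ in A N, (maxBirk S ψ (N + 1) θ - maxBirk S ψ (N + 1) (S θ)) ∂m
        = ∫ θ in A N, maxBirk S ψ (N + 1) θ ∂m - ∫ θ in A N, maxBirk S ψ (N + 1) (S θ) ∂m :=
      integral_sub (hMint (N + 1)).integrableOn hΨS.integrableOn
    have h4 : ∫ θ in A N, maxBirk S ψ (N + 1) θ ∂m = ∫ θ, maxBirk S ψ (N + 1) θ ∂m := by
      refine setIntegral_eq_integral_of_forall_compl_eq_zero (fun θ hθ => ?_)
      have : ¬ (0 < maxBirk S ψ (N + 1) θ) := hθ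
      exact le_antisymm (not_lt.1 this) (maxBirk_nonneg S ψ (N + 1) θ)
    have h5 : ∫ θ in A N, maxBirk S ψ (N + 1) (S θ) ∂m ≤ ∫ θ, maxBirk S ψ (N + 1) (S θ) ∂m :=
      setIntegral_le_integral hΨS (ae_of_all _ fun θ => maxBirk_nonneg S ψ (N + 1) (S θ))
    have h6 : ∫ θ, maxBirk S ψ (N + 1) (S θ) ∂m = ∫ θ, maxBirk S ψ (N + 1) θ ∂m := by
      have hmap : Measure.map S m = m := hS.toMeasurePreserving.map_eq
      calc ∫ θ, maxBirk S ψ (N + 1) (S θ) ∂m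
          = ∫ θ, maxBirk S ψ (N + 1) θ ∂(Measure.map S m) := by
            rw [integral_map hSm.aemeasurable]
            rw [hmap]
            exact hΨmeas.aestronglyMeasurable
        _ = ∫ θ, maxBirk S ψ (N + 1) θ ∂m := by rw [hmap]
    linarith
  -- the set of points with unbounded Birkhoff sums
  set E : Set Θ := ⋂ k : ℕ, ⋃ n : ℕ, {θ | (k : ℝ) < birkhoffSum S ψ n θ} with hEdef
  have hEm : MeasurableSet E :=
    MeasurableSet.iInter fun k => MeasurableSet.iUnion fun n =>
      measurableSet_lt measurable_const (birkhoffSum_measurable hSm hψ n)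
  have hinv : S ⁻¹' E = E := by
    ext θ
    simp only [hEdef, mem_preimage, mem_iInter, mem_iUnion, mem_setOf_eq]
    constructor
    · intro h k
      obtain ⟨k', hk'⟩ := exists_nat_ge ((k : ℝ) + |ψ θ|)
      obtain ⟨n, hn⟩ := h k'
      refine ⟨n + 1, ?_⟩
      rw [birkhoffSum_succ']
      have h1 : -ψ θ ≤ |ψ θ| := neg_le_abs _
      linarith
    · intro h k
      obtain ⟨k', hk'⟩ := exists_nat_ge ((k : ℝ) + ψ θ)
      obtain ⟨n, hn⟩ := h k'
      cases n with
      | zero =>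
        exfalso
        rw [birkhoffSum_zero] at hn
        have : (0 : ℝ) ≤ (k' : ℝ) := Nat.cast_nonneg _
        linarith
      | succ n =>
        refine ⟨n, ?_⟩
        rw [birkhoffSum_succ'] at hn
        linarith
  rcases hS.toPreErgodic.ae_empty_or_univ hEm hinv with hcase | hcase
  · -- E is null: a.e. the Birkhoff sums are bounded above
    have h0 : m E = 0 := by
      have := measure_congr hcase
      simpa using this
    have h1 : ∀ᵐ θ ∂m, θ ∉ E := (measure_eq_zero_iff_ae_notMem (μ := m)).1 h0
    filter_upwards [h1] with θ hθ
    simp only [hEdef, mem_iInter, mem_iUnion, mem_setOf_eq, not_forall, not_exists, not_lt] at hθ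
    obtain ⟨k, hk⟩ := hθ
    exact ⟨k, hk⟩
  · -- E is conull: contradiction with ∫ ψ < 0
    exfalso
    have hE1 : m E = 1 := by
      have := measure_congr hcase
      simpa using this
    have hmono : Monotone A := by
      apply monotone_nat_of_le_succ
      intro N θ hθ
      exact lt_of_lt_of_le hθ (maxBirk_mono S ψ (N + 1) θ)
    have hEsub : E ⊆ ⋃ N, A N := by
      intro θ hθ
      simp only [hEdef, mem_iInter, mem_iUnion, mem_setOf_eq] at hθ
      obtain ⟨n, hn⟩ := hθ 0
      have h0 : (0 : ℝ) < birkhoffSum S ψ n θ := by exact_mod_cast hn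
      refine mem_iUnion.2 ⟨n, ?_⟩
      exact lt_of_lt_of_le h0 (birkhoffSum_le_maxBirk S ψ n (n + 1) θ (by omega))
    have hU1 : m (⋃ N, A N) = 1 := by
      refine le_antisymm prob_le_one ?_
      rw [← hE1]
      exact measure_mono hEsub
    -- measures of complements tend to zero
    have hcompl : Tendsto (fun N => m ((A N)ᶜ)) atTop (𝓝 0) := by
      have h1 : Tendsto (fun N => m ((A N)ᶜ)) atTop (𝓝 (m (⋂ N, (A N)ᶜ))) := by
        refine tendsto_measure_iInter_atTop (fun N => (hAm N).compl.nullMeasurableSet)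
          (fun i j hij => compl_subset_compl.2 (hmono hij)) ⟨0, measure_ne_top _ _⟩
      have h2 : m (⋂ N, (A N)ᶜ) = 0 := by
        rw [← compl_iUnion]
        rw [measure_compl (MeasurableSet.iUnion hAm) (measure_ne_top _ _), hU1, measure_univ]
        simp
      rwa [h2] at h1
    have hcomplR : Tendsto (fun N => (m ((A N)ᶜ)).toReal) atTop (𝓝 0) := by
      have := (ENNReal.tendsto_toReal ENNReal.zero_ne_top).comp hcompl
      exact this
    have hbound : ∀ N, ‖∫ θ in (A N)ᶜ, ψ θ ∂m‖ ≤ B * (m ((A N)ᶜ)).toReal := by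
      intro N
      refine norm_setIntegral_le_of_norm_le_const (measure_lt_top _ _) ?_
      intro θ _
      simpa [Real.norm_eq_abs] using hB θ
    have hsplit : ∀ N, ∫ θ in A N, ψ θ ∂m = (∫ θ, ψ θ ∂m) - ∫ θ in (A N)ᶜ, ψ θ ∂m := by
      intro N
      have := integral_add_compl (hAm N) hψint
      linarith
    have hlim : Tendsto (fun N => ∫ θ in A N, ψ θ ∂m) atTop (𝓝 (∫ θ, ψ θ ∂m)) := by
      have h1 : Tendsto (fun N => ∫ θ in (A N)ᶜ, ψ θ ∂m) atTop (𝓝 0) := by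
        refine squeeze_zero_norm hbound ?_
        simpa using hcomplR.const_mul B
      have h2 := (tendsto_const_nhds (x := ∫ θ, ψ θ ∂m) (f := atTop)).sub h1
      simp only [sub_zero] at h2
      refine h2.congr (fun N => (hsplit N).symm)
    have : 0 ≤ ∫ θ, ψ θ ∂m := ge_of_tendsto hlim (Eventually.of_forall key)
    linarith

end Garsia

/-- for a continuous skew product on `Θ × [0,1]` over a homeomorphism of a
compact metric space with an ergodic invariant measure `m`, with `C¹` fiber maps of jointly
continuous strictly positive derivative, an `(F,m)`-invariant graph `γ` with negative fiber
Lyapunov exponent `λ_m(γ) = ∫ log Df_θ(γ θ) dm < 0` is attracting with respect to `m_γ`: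
for `m`-a.e. `θ` nearby fiber orbits are asymptotic to the orbit of `γ θ`. -/
theorem invariant_graph_attracting_of_negative_lyapunov
    {Θ : Type*} [MetricSpace Θ] [CompactSpace Θ] [MeasurableSpace Θ] [BorelSpace Θ]
    (S : Θ ≃ₜ Θ) (m : Measure Θ) [IsProbabilityMeasure m] (hSerg : Ergodic ⇑S m)
    (f : Θ → ℝ → ℝ)
    (hmaps : ∀ θ, MapsTo (f θ) (Icc (0 : ℝ) 1) (Icc (0 : ℝ) 1))
    (hcont : ContinuousOn (fun p : Θ × ℝ => f p.1 p.2) (univ ×ˢ Icc (0 : ℝ) 1))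
    (hdiff : ∀ θ, ∀ x ∈ Icc (0 : ℝ) 1, DifferentiableWithinAt ℝ (f θ) (Icc (0 : ℝ) 1) x)
    (hDcont : ContinuousOn (fun p : Θ × ℝ => derivWithin (f p.1) (Icc (0 : ℝ) 1) p.2)
      (univ ×ˢ Icc (0 : ℝ) 1))
    (hDpos : ∀ θ, ∀ x ∈ Icc (0 : ℝ) 1, 0 < derivWithin (f θ) (Icc (0 : ℝ) 1) x)
    (γ : Θ → ℝ) (hγmeas : Measurable γ) (hγmem : ∀ θ, γ θ ∈ Icc (0 : ℝ) 1)
    (hgraph : ∀ᵐ θ ∂m, f θ (γ θ) = γ (S θ))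
    (hneg : ∫ θ, Real.log (derivWithin (f θ) (Icc (0 : ℝ) 1) (γ θ)) ∂m < 0) :
    ∀ᵐ θ ∂m, ∃ δ > (0 : ℝ), ∀ z ∈ Icc (0 : ℝ) 1, |z - γ θ| < δ →
      Tendsto (fun n : ℕ => |fiberIter (⇑S) f n θ z - fiberIter (⇑S) f n θ (γ θ)|)
        atTop (𝓝 0) := by
  have hSm : Measurable (⇑S) := S.continuous.measurable
  have hne : Nonempty Θ := by
    by_contra h
    rw [not_nonempty_iff] at h
    have h1 : m univ = 1 := measure_univ
    rw [Set.univ_eq_empty_iff.mpr h, measure_empty] at h1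
    exact zero_ne_one h1
  set D : Θ → ℝ → ℝ := fun θ x => derivWithin (f θ) (Icc (0 : ℝ) 1) x with hDdef
  have hKcomp : IsCompact ((univ : Set Θ) ×ˢ Icc (0 : ℝ) 1) := isCompact_univ.prod isCompact_Icc
  have hKne : ((univ : Set Θ) ×ˢ Icc (0 : ℝ) 1).Nonempty :=
    ⟨(Classical.arbitrary Θ, 0), mem_univ _, left_mem_Icc.2 zero_le_one⟩
  obtain ⟨pa, hpaK, hpa⟩ := hKcomp.exists_isMinOn hKne hDcont
  obtain ⟨pb, hpbK, hpb⟩ := hKcomp.exists_isMaxOn hKne hDcont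
  set a : ℝ := D pa.1 pa.2 with hadef
  set b : ℝ := D pb.1 pb.2 with hbdef
  have ha : 0 < a := hDpos pa.1 pa.2 hpaK.2
  have hbnd : ∀ θ, ∀ x ∈ Icc (0 : ℝ) 1, a ≤ D θ x ∧ D θ x ≤ b := by
    intro θ x hx
    have h1 := hpa (show (θ, x) ∈ ((univ : Set Θ) ×ˢ Icc (0:ℝ) 1) from ⟨mem_univ _, hx⟩)
    have h2 := hpb (show (θ, x) ∈ ((univ : Set Θ) ×ˢ Icc (0:ℝ) 1) from ⟨mem_univ _, hx⟩)
    exact ⟨h1, h2⟩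
  set φ : Θ → ℝ := fun θ => Real.log (D θ (γ θ)) with hφdef
  have hγD : ∀ θ, a ≤ D θ (γ θ) ∧ D θ (γ θ) ≤ b := fun θ => hbnd θ _ (hγmem θ)
  have hgmeas : Measurable fun θ => D θ (γ θ) := by
    have h1 : Continuous (((univ : Set Θ) ×ˢ Icc (0 : ℝ) 1).restrict
        (fun p : Θ × ℝ => D p.1 p.2)) := hDcont.restrict
    have h2 : Measurable fun θ =>
        (⟨(θ, γ θ), ⟨mem_univ _, hγmem θ⟩⟩ : ((univ : Set Θ) ×ˢ Icc (0 : ℝ) 1 : Set (Θ × ℝ))) :=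
      (measurable_id.prodMk hγmeas).subtype_mk
    exact h1.measurable.comp h2
  have hφmeas : Measurable φ := Real.measurable_log.comp hgmeas
  have hφbd : ∀ θ, |φ θ| ≤ |Real.log a| + |Real.log b| := by
    intro θ
    have h1 := (hγD θ).1
    have h2 := (hγD θ).2
    have l1 : Real.log a ≤ φ θ := Real.log_le_log ha h1
    have l2 : φ θ ≤ Real.log b := Real.log_le_log (lt_of_lt_of_le ha h1) h2
    have a1 : -|Real.log a| ≤ Real.log a := neg_abs_le _
    have a2 : Real.log b ≤ |Real.log b| := le_abs_self _
    rw [abs_le]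
    constructor <;> [skip; skip] <;>
      · first
        | (have := abs_nonneg (Real.log b); linarith)
        | (have := abs_nonneg (Real.log a); linarith)
  have hφint : Integrable φ m :=
    (integrable_const (|Real.log a| + |Real.log b|)).mono' hφmeas.aestronglyMeasurable
      (ae_of_all _ fun θ => by simpa [Real.norm_eq_abs] using hφbd θ)
  have hneg' : ∫ θ, φ θ ∂m < 0 := hneg
  set lam : ℝ := ∫ θ, φ θ ∂m with hlamdef
  set ε : ℝ := -lam / 3 with hεdef
  have hεpos : 0 < ε := by
    rw [hεdef]; linarith
  set ψ : Θ → ℝ := fun θ => φ θ + 2 * ε with hψdef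
  have hψmeas : Measurable ψ := hφmeas.add measurable_const
  have hψbd : ∀ θ, |ψ θ| ≤ |Real.log a| + |Real.log b| + 2 * ε := by
    intro θ
    calc |ψ θ| ≤ |φ θ| + |2 * ε| := abs_add_le _ _
      _ ≤ (|Real.log a| + |Real.log b|) + 2 * ε := by
          have := hφbd θ
          rw [abs_of_pos (by linarith : (0:ℝ) < 2 * ε)]
          linarith
  have hψint : ∫ θ, ψ θ ∂m < 0 := by
    have : ∫ θ, ψ θ ∂m = lam + 2 * ε := by
      rw [hψdef]
      rw [integral_add hφint (integrable_const _), integral_const, probReal_univ]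
      simp [hlamdef]
    rw [this, hεdef]
    linarith
  have hgar := garsia hSerg hψmeas hψbd hψint
  -- uniform continuity of the derivative
  have hunif := hKcomp.uniformContinuousOn_of_continuous hDcont
  rw [Metric.uniformContinuousOn_iff] at hunif
  have hexp1 : (1 : ℝ) < Real.exp ε := by
    rw [← Real.exp_zero]
    exact Real.exp_lt_exp.2 hεpos
  obtain ⟨ρ, hρpos, hρ⟩ := hunif (a * (Real.exp ε - 1)) (mul_pos ha (sub_pos.2 hexp1))
  have hstep : ∀ θ u v, u ∈ Icc (0 : ℝ) 1 → v ∈ Icc (0 : ℝ) 1 → |v - u| < ρ →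
      |f θ v - f θ u| ≤ (Real.exp ε * D θ u) * |v - u| := by
    intro θ u v hu hv hvu
    have hsub : uIcc v u ⊆ Icc (0 : ℝ) 1 := uIcc_subset_Icc hv hu
    have hder : ∀ x ∈ uIcc v u, HasDerivWithinAt (f θ) (D θ x) (uIcc v u) x := fun x hx =>
      ((hdiff θ x (hsub hx)).hasDerivWithinAt).mono hsub
    have hboundD : ∀ x ∈ uIcc v u, ‖D θ x‖ ≤ Real.exp ε * D θ u := by
      intro x hx
      have hx1 : x ∈ Icc (0 : ℝ) 1 := hsub hx
      have hxu : |x - u| ≤ |v - u| := by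
        rcases mem_uIcc.1 hx with ⟨h1, h2⟩ | ⟨h1, h2⟩
        · rw [abs_sub_comm, abs_of_nonneg (by linarith)]
          calc u - x ≤ u - v := by linarith
            _ ≤ |u - v| := le_abs_self _
            _ = |v - u| := abs_sub_comm u v
        · rw [abs_of_nonneg (by linarith)]
          exact le_trans (by linarith : x - u ≤ v - u) (le_abs_self _)
      have hd : dist ((θ, x) : Θ × ℝ) ((θ, u) : Θ × ℝ) < ρ := by
        rw [Prod.dist_eq]
        simp only [dist_self, Real.dist_eq]
        rw [max_eq_right (abs_nonneg _)]
        exact lt_of_le_of_lt hxu hvu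
      have h5 := hρ (θ, x) ⟨mem_univ _, hx1⟩ (θ, u) ⟨mem_univ _, hu⟩ hd
      rw [Real.dist_eq] at h5
      have h6 : D θ x - D θ u < a * (Real.exp ε - 1) := lt_of_le_of_lt (le_abs_self _) h5
      have h7 : a ≤ D θ u := (hbnd θ u hu).1
      have hDx : 0 < D θ x := hDpos θ x hx1
      rw [Real.norm_eq_abs, abs_of_pos hDx]
      nlinarith
    have hmvt := Convex.norm_image_sub_le_of_norm_hasDerivWithin_le hder hboundD
      (convex_uIcc v u) (right_mem_uIcc) (left_mem_uIcc)
    simpa [Real.norm_eq_abs] using hmvt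
  -- invariance of the graph along all forward iterates
  have hgraphAll : ∀ᵐ θ ∂m, ∀ j : ℕ,
      f ((⇑S)^[j] θ) (γ ((⇑S)^[j] θ)) = γ (S ((⇑S)^[j] θ)) := by
    rw [ae_all_iff]
    intro j
    exact ((hSerg.toMeasurePreserving.iterate j).quasiMeasurePreserving).ae hgraph
  filter_upwards [hgar, hgraphAll] with θ hCex hgr
  obtain ⟨C, hC⟩ := hCex
  have hC0 : 0 ≤ C := by
    have := hC 0
    rwa [birkhoffSum_zero] at this
  refine ⟨ρ * Real.exp (-C), by positivity, ?_⟩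
  intro z hz hzδ
  have horbit : ∀ n, fiberIter (⇑S) f n θ (γ θ) = γ ((⇑S)^[n] θ) := by
    intro n
    induction n with
    | zero => rfl
    | succ n ih =>
      show f ((⇑S)^[n] θ) (fiberIter (⇑S) f n θ (γ θ)) = _
      rw [ih, hgr n, Function.iterate_succ_apply']
  have hmem : ∀ n, fiberIter (⇑S) f n θ z ∈ Icc (0 : ℝ) 1 := by
    intro n
    induction n with
    | zero => exact hz
    | succ n ih => exact hmaps _ ih
  -- relation between Birkhoff sums of ψ and φ
  have hsumrel : ∀ n : ℕ, birkhoffSum (⇑S) ψ n θ = birkhoffSum (⇑S) φ n θ + n * (2 * ε) := by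
    intro n
    simp only [birkhoffSum, hψdef]
    rw [Finset.sum_add_distrib, Finset.sum_const, Finset.card_range]
    push_cast
    ring
  have hSb : ∀ n : ℕ, birkhoffSum (⇑S) φ n θ + n * ε ≤ C - n * ε := by
    intro n
    have h1 := hC n
    rw [hsumrel n] at h1
    linarith
  -- the main induction
  have hkey : ∀ n, |fiberIter (⇑S) f n θ z - γ ((⇑S)^[n] θ)| ≤
      Real.exp (birkhoffSum (⇑S) φ n θ + n * ε) * |z - γ θ| := by
    intro n
    induction n with
    | zero =>
      simp [fiberIter, birkhoffSum_zero]
    | succ n ih =>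
      have hdlt : |fiberIter (⇑S) f n θ z - γ ((⇑S)^[n] θ)| < ρ := by
        have h1 : Real.exp (birkhoffSum (⇑S) φ n θ + n * ε) ≤ Real.exp C :=
          Real.exp_le_exp.2 (by
            have h8 := hSb n
            have h9 : (0:ℝ) ≤ n * ε := by positivity
            linarith)
        have h2 : |z - γ θ| < ρ * Real.exp (-C) := hzδ
        calc |fiberIter (⇑S) f n θ z - γ ((⇑S)^[n] θ)|
            ≤ Real.exp (birkhoffSum (⇑S) φ n θ + n * ε) * |z - γ θ| := ih
          _ ≤ Real.exp C * |z - γ θ| := by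
              exact mul_le_mul_of_nonneg_right h1 (abs_nonneg _)
          _ < Real.exp C * (ρ * Real.exp (-C)) := by
              exact mul_lt_mul_of_pos_left h2 (Real.exp_pos C)
          _ = ρ := by
              rw [show Real.exp C * (ρ * Real.exp (-C))
                  = (Real.exp C * Real.exp (-C)) * ρ by ring, ← Real.exp_add]
              simp
      have hstep' := hstep ((⇑S)^[n] θ) (γ ((⇑S)^[n] θ)) (fiberIter (⇑S) f n θ z)
        (hγmem _) (hmem n) hdlt
      have hDγ : D ((⇑S)^[n] θ) (γ ((⇑S)^[n] θ)) = Real.exp (φ ((⇑S)^[n] θ)) :=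
        (Real.exp_log (lt_of_lt_of_le ha (hγD ((⇑S)^[n] θ)).1)).symm
      have hgoal : fiberIter (⇑S) f (n + 1) θ z = f ((⇑S)^[n] θ) (fiberIter (⇑S) f n θ z) := rfl
      have hγgoal : γ ((⇑S)^[n + 1] θ) = f ((⇑S)^[n] θ) (γ ((⇑S)^[n] θ)) := by
        rw [Function.iterate_succ_apply', ← hgr n]
      rw [hgoal, hγgoal, birkhoffSum_succ]
      calc |f ((⇑S)^[n] θ) (fiberIter (⇑S) f n θ z) - f ((⇑S)^[n] θ) (γ ((⇑S)^[n] θ))|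
          ≤ (Real.exp ε * D ((⇑S)^[n] θ) (γ ((⇑S)^[n] θ))) *
            |fiberIter (⇑S) f n θ z - γ ((⇑S)^[n] θ)| := hstep'
        _ ≤ (Real.exp ε * Real.exp (φ ((⇑S)^[n] θ))) *
            (Real.exp (birkhoffSum (⇑S) φ n θ + n * ε) * |z - γ θ|) := by
            rw [hDγ]
            exact mul_le_mul_of_nonneg_left ih (by positivity)
        _ = Real.exp (birkhoffSum (⇑S) φ n θ + φ ((⇑S)^[n] θ) + (n + 1 : ℕ) * ε) * |z - γ θ| := by
            rw [← Real.exp_add, ← mul_assoc, ← Real.exp_add]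
            congr 2
            push_cast
            ring
  -- conclusion: squeeze
  have hup : ∀ n : ℕ, |fiberIter (⇑S) f n θ z - fiberIter (⇑S) f n θ (γ θ)| ≤
      Real.exp (C - n * ε) * |z - γ θ| := by
    intro n
    rw [horbit n]
    calc |fiberIter (⇑S) f n θ z - γ ((⇑S)^[n] θ)|
        ≤ Real.exp (birkhoffSum (⇑S) φ n θ + n * ε) * |z - γ θ| := hkey n
      _ ≤ Real.exp (C - n * ε) * |z - γ θ| :=
          mul_le_mul_of_nonneg_right (Real.exp_le_exp.2 (hSb n)) (abs_nonneg _)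
  have htend : Tendsto (fun n : ℕ => Real.exp (C - n * ε) * |z - γ θ|) atTop (𝓝 0) := by
    have h1 : Tendsto (fun n : ℕ => C - n * ε) atTop atBot := by
      apply tendsto_atBot_add_const_left
      have h2 : Tendsto (fun n : ℕ => (n : ℝ) * ε) atTop atTop :=
        Tendsto.atTop_mul_const hεpos tendsto_natCast_atTop_atTop
      exact tendsto_neg_atBot_iff.2 h2
    have h3 := Real.tendsto_exp_atBot.comp h1
    have h4 := h3.mul_const |z - γ θ|
    simpa using h4
  exact squeeze_zero (fun n => abs_nonneg _) hup htend
end
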